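/- Fix n ≥ 1 and V, η ∈ ℝⁿ with ⟪V, η⟫ = 0, and define g : ℝⁿ → ℝ by g(p) = 2^{−1/3}(‖p‖^{4/3}‖V‖² − 4‖p‖^{−2/3}⟪p,V⟫²) for p ≠ 0. Then for every p ≠ 0, the second derivative of g at p evaluated at (η, η) is nonnegative. (This says that the cost c(x,y) = ‖x−y‖⁻² satisfies the Ma–Trudinger–Wang condition (MTW): D²_{p_k p_l} A_{ij}(x,p) V^i V^j η_k η_l ≥ 0 whenever ⟪V,η⟫ = 0.) -/

import Mathlib

open RealInnerProductSpace

set_option maxHeartbeats 1000000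

theorem MTW_condition_inv_square_cost
    (n : ℕ) (hn : 1 ≤ n) (V η : EuclideanSpace ℝ (Fin n)) (horth : ⟪V, η⟫ = 0)
    (g : EuclideanSpace ℝ (Fin n) → ℝ)
    (hg : ∀ q : EuclideanSpace ℝ (Fin n), q ≠ 0 →
      g q = (2 : ℝ) ^ (-(1 / 3 : ℝ)) *
        (‖q‖ ^ ((4 : ℝ) / 3) * ‖V‖ ^ 2 - 4 * ‖q‖ ^ (-(2 / 3 : ℝ)) * ⟪q, V⟫ ^ 2))
    (p : EuclideanSpace ℝ (Fin n)) (hp : p ≠ 0) :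
    0 ≤ fderiv ℝ (fun q => fderiv ℝ g q) p η η := by
  have hcpos : (0:ℝ) < (2 : ℝ) ^ (-(1 / 3 : ℝ)) := Real.rpow_pos_of_pos (by norm_num) _
  set c : ℝ := (2 : ℝ) ^ (-(1 / 3 : ℝ)) with hcdef
  -- g = G on nonzero vectors, where G is the obvious smooth extension
  have hgG : ∀ q : EuclideanSpace ℝ (Fin n), q ≠ 0 →
      g q = c * ((‖q‖^2 : ℝ) ^ ((2:ℝ)/3) * ‖V‖^2
        - 4 * ((‖q‖^2 : ℝ) ^ (-(1/3:ℝ)) * (innerSL ℝ V q * innerSL ℝ V q))) := by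
    intro q hq
    have hq' : (0:ℝ) < ‖q‖ := norm_pos_iff.mpr hq
    have e1 : (‖q‖^2 : ℝ) ^ ((2:ℝ)/3) = ‖q‖ ^ ((4:ℝ)/3) := by
      rw [← Real.rpow_natCast ‖q‖ 2, ← Real.rpow_mul hq'.le]; norm_num
    have e2 : (‖q‖^2 : ℝ) ^ (-(1/3:ℝ)) = ‖q‖ ^ (-(2/3:ℝ)) := by
      rw [← Real.rpow_natCast ‖q‖ 2, ← Real.rpow_mul hq'.le]; norm_num
    rw [hg q hq]
    simp only [innerSL_apply_apply, e1, e2]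
    rw [real_inner_comm q V]
    ring
  -- first derivative of G at any nonzero point
  have hG' : ∀ q : EuclideanSpace ℝ (Fin n), q ≠ 0 → HasFDerivAt
      (fun y => c * ((‖y‖^2 : ℝ) ^ ((2:ℝ)/3) * ‖V‖^2
        - 4 * ((‖y‖^2 : ℝ) ^ (-(1/3:ℝ)) * (innerSL ℝ V y * innerSL ℝ V y))))
      (c • (((‖V‖^2 : ℝ)) • ((((2:ℝ)/3) * (‖q‖^2:ℝ) ^ ((2:ℝ)/3 - 1)) • (2 • innerSL ℝ q))
       - (4:ℝ) • ((‖q‖^2:ℝ) ^ (-(1/3:ℝ)) • (innerSL ℝ V q • (innerSL ℝ V) + innerSL ℝ V q • (innerSL ℝ V))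
           + (innerSL ℝ V q * innerSL ℝ V q) • (((-(1/3:ℝ)) * (‖q‖^2:ℝ) ^ (-(1/3:ℝ) - 1)) • (2 • innerSL ℝ q))))) q := by
    intro q hq
    have hq' : ‖q‖ ≠ 0 := norm_ne_zero_iff.mpr hq
    have hNpos : (0:ℝ) < ‖q‖^2 := by positivity
    have hN : HasFDerivAt (fun y : EuclideanSpace ℝ (Fin n) => (‖y‖^2 : ℝ)) (2 • innerSL ℝ q) q :=
      (hasStrictFDerivAt_norm_sq q).hasFDerivAt
    have hm : HasFDerivAt (fun y : EuclideanSpace ℝ (Fin n) => innerSL ℝ V y) (innerSL ℝ V) q :=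
      (innerSL ℝ V).hasFDerivAt
    exact (((hN.rpow_const (p := (2:ℝ)/3) (Or.inl hNpos.ne')).mul_const (‖V‖^2)).sub
      (((hN.rpow_const (p := -(1/3:ℝ)) (Or.inl hNpos.ne')).mul (hm.mul hm)).const_mul
        (4:ℝ))).const_mul c
  have hmemp : {x : EuclideanSpace ℝ (Fin n) | x ≠ 0} ∈ nhds p :=
    isOpen_compl_singleton.mem_nhds (by simpa using hp)
  have hev2 : (fun q => fderiv ℝ g q) =ᶠ[nhds p] (fun q =>
      c • (((‖V‖^2 : ℝ)) • ((((2:ℝ)/3) * (‖q‖^2:ℝ) ^ ((2:ℝ)/3 - 1)) • (2 • innerSL ℝ q))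
       - (4:ℝ) • ((‖q‖^2:ℝ) ^ (-(1/3:ℝ)) • (innerSL ℝ V q • (innerSL ℝ V) + innerSL ℝ V q • (innerSL ℝ V))
           + (innerSL ℝ V q * innerSL ℝ V q) • (((-(1/3:ℝ)) * (‖q‖^2:ℝ) ^ (-(1/3:ℝ) - 1)) • (2 • innerSL ℝ q))))) := by
    filter_upwards [hmemp] with q hq
    have hgGq : g =ᶠ[nhds q] (fun y => c * ((‖y‖^2 : ℝ) ^ ((2:ℝ)/3) * ‖V‖^2
        - 4 * ((‖y‖^2 : ℝ) ^ (-(1/3:ℝ)) * (innerSL ℝ V y * innerSL ℝ V y)))) := by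
      filter_upwards [isOpen_compl_singleton.mem_nhds (by simpa using hq)] with x hx
      exact hgG x hx
    rw [hgGq.fderiv_eq, (hG' q hq).fderiv]
  rw [hev2.fderiv_eq]
  -- second derivative of G at p
  have hNpos : (0:ℝ) < ‖p‖^2 := by
    have := norm_pos_iff.mpr hp; positivity
  have hN : HasFDerivAt (fun y : EuclideanSpace ℝ (Fin n) => (‖y‖^2 : ℝ)) (2 • innerSL ℝ p) p :=
    (hasStrictFDerivAt_norm_sq p).hasFDerivAt
  have hm : HasFDerivAt (fun y : EuclideanSpace ℝ (Fin n) => innerSL ℝ V y) (innerSL ℝ V) p :=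
    (innerSL ℝ V).hasFDerivAt
  have hsli : HasFDerivAt (fun q : EuclideanSpace ℝ (Fin n) => innerSL ℝ q)
      (innerSL ℝ : EuclideanSpace ℝ (Fin n) →L[ℝ] EuclideanSpace ℝ (Fin n) →L[ℝ] ℝ) p :=
    (innerSL ℝ : EuclideanSpace ℝ (Fin n) →L[ℝ] EuclideanSpace ℝ (Fin n) →L[ℝ] ℝ).hasFDerivAt
  have hw2 := hsli.const_smul (2:ℕ)
  have hu1 := (hN.rpow_const (p := (2:ℝ)/3 - 1) (Or.inl hNpos.ne')).const_mul ((2:ℝ)/3)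
  have hP := hu1.smul hw2
  have hvP := hP.const_smul (‖V‖^2 : ℝ)
  have hu3 := hN.rpow_const (p := -(1/3:ℝ)) (Or.inl hNpos.ne')
  have hmL := hm.smul (hasFDerivAt_const (innerSL ℝ V) p)
  have hadd := hmL.add hmL
  have hQ := hu3.smul hadd
  have hmm2 := hm.mul hm
  have hu4 := (hN.rpow_const (p := -(1/3:ℝ) - 1) (Or.inl hNpos.ne')).const_mul (-(1/3:ℝ))
  have hR2 := hu4.smul hw2
  have hR := hmm2.smul hR2
  have h4QR := (hQ.add hR).const_smul (4:ℝ)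
  have hfinal := (hvP.sub h4QR).const_smul c
  rw [(show HasFDerivAt (fun q =>
      c • (((‖V‖^2 : ℝ)) • ((((2:ℝ)/3) * (‖q‖^2:ℝ) ^ ((2:ℝ)/3 - 1)) • (2 • innerSL ℝ q))
       - (4:ℝ) • ((‖q‖^2:ℝ) ^ (-(1/3:ℝ)) • (innerSL ℝ V q • (innerSL ℝ V) + innerSL ℝ V q • (innerSL ℝ V))
           + (innerSL ℝ V q * innerSL ℝ V q) • (((-(1/3:ℝ)) * (‖q‖^2:ℝ) ^ (-(1/3:ℝ) - 1)) • (2 • innerSL ℝ q))))) _ p from hfinal).fderiv]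
  simp only [ContinuousLinearMap.smul_apply, ContinuousLinearMap.add_apply,
    ContinuousLinearMap.sub_apply, ContinuousLinearMap.smulRight_apply,
    ContinuousLinearMap.zero_apply, innerSL_apply_apply, smul_eq_mul, nsmul_eq_mul,
    ContinuousLinearMap.coe_smul', Pi.smul_apply, horth, mul_zero, zero_mul, add_zero, zero_add,
    Nat.cast_ofNat, smul_zero, Pi.smul_apply', Pi.mul_apply, Pi.add_apply]
  -- now a scalar inequality
  by_cases hV0 : V = 0
  · simp [hV0]
  by_cases hη0 : η = 0
  · simp [hη0]
  have hs : (0:ℝ) < ‖p‖^2 := hNpos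
  have e1 : (‖p‖^2:ℝ) ^ ((2:ℝ)/3 - 1) = (‖p‖^2:ℝ) ^ (-(1/3:ℝ)) := by norm_num
  have e2 : (‖p‖^2:ℝ) ^ ((2:ℝ)/3 - 1 - 1) = ((‖p‖^2:ℝ) ^ (-(1/3:ℝ)))^4 := by
    rw [← Real.rpow_natCast ((‖p‖^2:ℝ) ^ (-(1/3:ℝ))) 4, ← Real.rpow_mul hs.le]; norm_num
  have e3 : (‖p‖^2:ℝ) ^ (-(1/3:ℝ) - 1) = ((‖p‖^2:ℝ) ^ (-(1/3:ℝ)))^4 := by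
    rw [← Real.rpow_natCast ((‖p‖^2:ℝ) ^ (-(1/3:ℝ))) 4, ← Real.rpow_mul hs.le]; norm_num
  have e4 : (‖p‖^2:ℝ) ^ (-(1/3:ℝ) - 1 - 1) = ((‖p‖^2:ℝ) ^ (-(1/3:ℝ)))^7 := by
    rw [← Real.rpow_natCast ((‖p‖^2:ℝ) ^ (-(1/3:ℝ))) 7, ← Real.rpow_mul hs.le]; norm_num
  rw [e1, e2, e3, e4]
  have hw : (0:ℝ) < (‖p‖^2:ℝ) ^ (-(1/3:ℝ)) := Real.rpow_pos_of_pos hs _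
  have hws : ((‖p‖^2:ℝ) ^ (-(1/3:ℝ)))^3 * (‖p‖^2:ℝ) = 1 := by
    rw [← Real.rpow_natCast ((‖p‖^2:ℝ) ^ (-(1/3:ℝ))) 3, ← Real.rpow_mul hs.le]
    norm_num
    rw [Real.rpow_neg_one]
    exact inv_mul_cancel₀ hs.ne'
  set w : ℝ := (‖p‖^2:ℝ) ^ (-(1/3:ℝ)) with hwdef
  set s : ℝ := (‖p‖^2:ℝ) with hsdef
  set v : ℝ := ‖V‖^2 with hvdef
  set a : ℝ := (inner ℝ V p : ℝ) with hadef
  set t : ℝ := (inner ℝ p η : ℝ) with htdef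
  set hh : ℝ := (inner ℝ η η : ℝ) with hhdef
  have hv : (0:ℝ) < v := by
    have h' : ‖V‖ ≠ 0 := norm_ne_zero_iff.mpr hV0
    rw [hvdef]; positivity
  have hhh : (0:ℝ) < hh := by
    have h' : ‖η‖ ≠ 0 := norm_ne_zero_iff.mpr hη0
    rw [hhdef, real_inner_self_eq_norm_sq]; positivity
  -- Bessel-type inequality from orthogonality of V and η
  have hBess : a^2*hh + t^2*v ≤ s*v*hh := by
    have h0 : (0:ℝ) ≤ (inner ℝ ((v*hh) • p - (a*hh) • V - (t*v) • η)
        ((v*hh) • p - (a*hh) • V - (t*v) • η) : ℝ) := real_inner_self_nonneg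
    simp only [inner_sub_left, inner_sub_right, real_inner_smul_left,
      real_inner_smul_right] at h0
    have c1 : (inner ℝ p V : ℝ) = a := by rw [hadef]; exact real_inner_comm V p
    have c2 : (inner ℝ V p : ℝ) = a := hadef.symm
    have c3 : (inner ℝ η p : ℝ) = t := by rw [htdef]; exact real_inner_comm p η
    have c4 : (inner ℝ p η : ℝ) = t := htdef.symm
    have c5 : (inner ℝ η V : ℝ) = 0 := by rw [← horth]; exact real_inner_comm V η
    have c6 : (inner ℝ V η : ℝ) = 0 := horth
    have c7 : (inner ℝ p p : ℝ) = s := by rw [hsdef]; exact real_inner_self_eq_norm_sq p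
    have c8 : (inner ℝ V V : ℝ) = v := by rw [hvdef]; exact real_inner_self_eq_norm_sq V
    have c9 : (inner ℝ η η : ℝ) = hh := hhdef.symm
    simp only [c1, c2, c3, c4, c5, c6, c7, c8, c9] at h0
    nlinarith [mul_pos hv hhh, h0]
  have hK : (0:ℝ) ≤ v*hh - w^3*a^2*hh - w^3*t^2*v := by
    have h1 := mul_nonneg (pow_nonneg hw.le 3) (sub_nonneg.2 hBess)
    have h2 : w^3*s*(v*hh) = v*hh := by rw [hws, one_mul]
    nlinarith [h1, h2]
  have hint1 := mul_nonneg hK (by positivity : (0:ℝ) ≤ 8*w*v + 64*w^4*a^2)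
  have hint2 : (0:ℝ) ≤ 4*hh*w*(v - 4*w^3*a^2)^2 := by positivity
  erw [show ((innerSL ℝ) η) η = hh from rfl]
  refine mul_nonneg hcpos.le ?_
  nlinarith [hint1, hint2, hv, hw, hhh]
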